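/- Let P be a nonzero multivariate polynomial of total degree at most d over a finite field F, and pick r_1,…,r_n independently uniformly at random from F. Then the probability that P(r_1,…,r_n) = 0 is at most d/|F|. -/

import Mathlib

open Finset MvPolynomial

/-- Key counting lemma: the number of zeros, times `|F|`, is at most
`totalDegree * |F| ^ n`. -/
lemma schwartz_zippel_card {F : Type*} [Field F] [Fintype F] [DecidableEq F] :
    ∀ (n : ℕ) (P : MvPolynomial (Fin n) F), P ≠ 0 →
      ((Finset.univ.filter fun r : Fin n → F => MvPolynomial.eval r P = 0).card)
          * Fintype.card F
        ≤ P.totalDegree * (Fintype.card F) ^ n := by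
  intro n
  induction n with
  | zero =>
    intro P hP
    have hempty : (Finset.univ.filter fun r : Fin 0 → F => MvPolynomial.eval r P = 0) = ∅ := by
      rw [Finset.filter_eq_empty_iff]
      intro r _
      obtain ⟨a, rfl⟩ := MvPolynomial.C_surjective (Fin 0) P
      simp only [MvPolynomial.eval_C]
      intro h
      exact hP (by rw [h]; simp)
    rw [hempty]
    simp
  | succ n IH =>
    intro P hP
    set Q : Polynomial (MvPolynomial (Fin n) F) := MvPolynomial.finSuccEquiv F n P with hQ
    have hQ0 : Q ≠ 0 := fun h =>
      hP ((map_eq_zero_iff _ (AlgEquiv.injective _)).mp h)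
    set k : ℕ := Q.natDegree with hk
    set L : MvPolynomial (Fin n) F := Q.coeff k with hL
    have hL0 : L ≠ 0 := by
      have h1 := Polynomial.leadingCoeff_ne_zero.mpr hQ0
      rwa [Polynomial.leadingCoeff] at h1
    have hdeg : L.totalDegree + k ≤ P.totalDegree :=
      MvPolynomial.totalDegree_coeff_finSuccEquiv_add_le P k hL0
    classical
    set Z : Finset (Fin (n + 1) → F) :=
      Finset.univ.filter fun r => MvPolynomial.eval r P = 0 with hZ
    -- fiberwise count over the tail
    have hfib : Z.card = ∑ s : Fin n → F,
        (Z.filter fun r => Fin.tail r = s).card :=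
      Finset.card_eq_sum_card_fiberwise (fun r _ => Finset.mem_univ (Fin.tail r))
    -- for each tail s, the fiber injects into the set of heads that are zeros
    have hfiber_le : ∀ s : Fin n → F,
        (Z.filter fun r => Fin.tail r = s).card ≤
          (Finset.univ.filter fun a : F =>
            MvPolynomial.eval (Fin.cons a s) P = 0).card := by
      intro s
      apply Finset.card_le_card_of_injOn (fun r => r 0)
      · intro r hr
        simp only [Finset.mem_coe, Finset.mem_filter, Finset.mem_univ, true_and, hZ] at hr ⊢
        obtain ⟨h1, h2⟩ := hr
        rw [← h2]
        rwa [Fin.cons_self_tail r]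
      · intro r hr r' hr' h
        simp only [Finset.mem_coe, Finset.mem_filter, hZ] at hr hr'
        simp only at h
        have : Fin.cons (r 0) (Fin.tail r) = Fin.cons (r' 0) (Fin.tail r') := by
          rw [h, hr.2, hr'.2]
        rw [Fin.cons_self_tail, Fin.cons_self_tail] at this
        exact this
    -- bad tails: where the leading coefficient vanishes
    set B : Finset (Fin n → F) :=
      Finset.univ.filter fun s => MvPolynomial.eval s L = 0 with hB
    -- for good tails, at most k heads work
    have hgood : ∀ s : Fin n → F, s ∉ B →
        (Finset.univ.filter fun a : F =>
          MvPolynomial.eval (Fin.cons a s) P = 0).card ≤ k := by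
      intro s hs
      have hsL : MvPolynomial.eval s L ≠ 0 := by
        simpa [hB] using hs
      set q : Polynomial F := Q.map (MvPolynomial.eval s) with hq
      have hq0 : q ≠ 0 := by
        intro h
        apply hsL
        have : q.coeff k = 0 := by rw [h]; simp
        rwa [hq, Polynomial.coeff_map] at this
      have hsub : (Finset.univ.filter fun a : F =>
          MvPolynomial.eval (Fin.cons a s) P = 0) ⊆ q.roots.toFinset := by
        intro a ha
        simp only [Finset.mem_filter, Finset.mem_univ, true_and] at ha
        rw [MvPolynomial.eval_eq_eval_mv_eval'] at ha
        rw [Multiset.mem_toFinset, Polynomial.mem_roots hq0]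
        exact ha
      calc (Finset.univ.filter fun a : F =>
              MvPolynomial.eval (Fin.cons a s) P = 0).card
          ≤ q.roots.toFinset.card := Finset.card_le_card hsub
        _ ≤ Multiset.card q.roots := q.roots.toFinset_card_le
        _ ≤ q.natDegree := Polynomial.card_roots' q
        _ ≤ k := Polynomial.natDegree_map_le
    -- for any tail, at most |F| heads work
    have hany : ∀ s : Fin n → F,
        (Finset.univ.filter fun a : F =>
          MvPolynomial.eval (Fin.cons a s) P = 0).card ≤ Fintype.card F := by
      intro s
      simpa using Finset.card_le_card (Finset.filter_subset _ (Finset.univ : Finset F))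
    -- combine
    have hsplit : Z.card ≤ B.card * Fintype.card F + (Fintype.card F) ^ n * k := by
      calc Z.card = ∑ s : Fin n → F, (Z.filter fun r => Fin.tail r = s).card := hfib
        _ ≤ ∑ s : Fin n → F, (Finset.univ.filter fun a : F =>
              MvPolynomial.eval (Fin.cons a s) P = 0).card :=
            Finset.sum_le_sum fun s _ => hfiber_le s
        _ = ∑ s ∈ B, (Finset.univ.filter fun a : F =>
              MvPolynomial.eval (Fin.cons a s) P = 0).card
            + ∑ s ∈ Bᶜ, (Finset.univ.filter fun a : F =>
              MvPolynomial.eval (Fin.cons a s) P = 0).card :=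
            (Finset.sum_add_sum_compl B _).symm
        _ ≤ ∑ _s ∈ B, Fintype.card F + ∑ _s ∈ Bᶜ, k := by
            gcongr with s hs s hs
            · exact hany s
            · exact hgood s (by simpa using hs)
        _ = B.card * Fintype.card F + Bᶜ.card * k := by
            simp [Finset.sum_const, mul_comm]
        _ ≤ B.card * Fintype.card F + (Fintype.card F) ^ n * k := by
            gcongr
            simpa [Fintype.card_fun] using Finset.card_le_univ Bᶜ
    have hIH : B.card * Fintype.card F ≤ L.totalDegree * (Fintype.card F) ^ n :=
      IH L hL0
    calc Z.card * Fintype.card F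
        ≤ (B.card * Fintype.card F + (Fintype.card F) ^ n * k) * Fintype.card F := by
          exact Nat.mul_le_mul_right _ hsplit
      _ = (B.card * Fintype.card F) * Fintype.card F
          + k * (Fintype.card F) ^ (n + 1) := by ring
      _ ≤ (L.totalDegree * (Fintype.card F) ^ n) * Fintype.card F
          + k * (Fintype.card F) ^ (n + 1) := by gcongr
      _ = (L.totalDegree + k) * (Fintype.card F) ^ (n + 1) := by ring
      _ ≤ P.totalDegree * (Fintype.card F) ^ (n + 1) := by gcongr

/-- Schwartz–Zippel: a nonzero polynomial of total degree at most `d` over a finite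
field `F` vanishes at a uniformly random point of `F^n` with probability at most
`d / |F|`. -/
theorem schwartz_zippel {F : Type*} [Field F] [Fintype F] [DecidableEq F] {n : ℕ}
    (P : MvPolynomial (Fin n) F) (hP : P ≠ 0) (d : ℕ) (hd : P.totalDegree ≤ d) :
    ((Finset.univ.filter fun r : Fin n → F => MvPolynomial.eval r P = 0).card : ℝ)
        / (Fintype.card F : ℝ) ^ n
      ≤ (d : ℝ) / (Fintype.card F : ℝ) := by
  have hF : 0 < (Fintype.card F : ℝ) := by
    exact_mod_cast Fintype.card_pos
  rw [div_le_div_iff₀ (by positivity) hF]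
  have h := schwartz_zippel_card n P hP
  have h' : ((Finset.univ.filter fun r : Fin n → F =>
      MvPolynomial.eval r P = 0).card : ℝ) * Fintype.card F
      ≤ (P.totalDegree : ℝ) * (Fintype.card F) ^ n := by
    exact_mod_cast h
  calc ((Finset.univ.filter fun r : Fin n → F =>
          MvPolynomial.eval r P = 0).card : ℝ) * Fintype.card F
      ≤ (P.totalDegree : ℝ) * (Fintype.card F) ^ n := h'
    _ ≤ (d : ℝ) * (Fintype.card F) ^ n := by
        have hdd : (P.totalDegree : ℝ) ≤ d := by exact_mod_cast hd
        gcongr
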